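/- Let m ≥ 2 and γ ≥ 0 be integers with (m,γ) ≠ (2,0) (so that γ + m − 2 > 0), let P be a homogeneous harmonic polynomial of degree γ on ℝ^{2m}, and let h, k be real numbers. Define u on ℝ^{2m} \ {0} by u(x) = (h + k/(4(γ+m−2))) ‖x‖^{2−2m−2γ} P(x) − (k/(4(γ+m−2))) ‖x‖^{4−2m−2γ} P(x). Then Δ(Δu) = 0 on ℝ^{2m} \ {0}; u(x) = h P(x) and Δu(x) = k P(x) whenever ‖x‖ = 1; and u(x) = O(‖x‖^{4−2m−γ}) as ‖x‖ → ∞. -/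

import Mathlib

/-- The Euclidean Laplacian on `ℝ^n`: the trace of the Hessian, computed as the sum of the
second derivatives in the coordinate directions. -/
noncomputable def laplacian {n : ℕ} (f : EuclideanSpace ℝ (Fin n) → ℝ)
    (x : EuclideanSpace ℝ (Fin n)) : ℝ :=
  ∑ i : Fin n,
    iteratedFDeriv ℝ 2 f x ![EuclideanSpace.single i 1, EuclideanSpace.single i 1]

/-- `P : ℝ^n → ℝ` is a homogeneous harmonic polynomial of degree `γ`: it is a polynomial
function, homogeneous of degree `γ` (`P (t • x) = t ^ γ * P x`), and harmonic (`Δ P = 0`). -/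
def IsHomHarmonicPoly (n γ : ℕ) (P : EuclideanSpace ℝ (Fin n) → ℝ) : Prop :=
  (∃ p : MvPolynomial (Fin n) ℝ, ∀ x, P x = MvPolynomial.eval (fun i => x i) p) ∧
  (∀ (t : ℝ) (x : EuclideanSpace ℝ (Fin n)), P (t • x) = t ^ γ * P x) ∧
  (∀ x, laplacian P x = 0)

/-- The single-mode exterior bi-harmonic extension
`H^o_{h,k}(x) = (h + k/(4(γ+m-2))) ‖x‖^(2-2m-2γ) P(x) - (k/(4(γ+m-2))) ‖x‖^(4-2m-2γ) P(x)`
on `ℂ^m ≅ ℝ^(2m)`. -/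
noncomputable def Hout (m γ : ℕ) (P : EuclideanSpace ℝ (Fin (2 * m)) → ℝ) (h k : ℝ)
    (x : EuclideanSpace ℝ (Fin (2 * m))) : ℝ :=
  (h + k / (4 * ((γ : ℝ) + (m : ℝ) - 2))) * ‖x‖ ^ ((2 : ℝ) - 2 * (m : ℝ) - 2 * (γ : ℝ)) * P x
    - k / (4 * ((γ : ℝ) + (m : ℝ) - 2)) * ‖x‖ ^ ((4 : ℝ) - 2 * (m : ℝ) - 2 * (γ : ℝ)) * P x

namespace S7aux

abbrev E (n : ℕ) := EuclideanSpace ℝ (Fin n)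

variable {n : ℕ}

noncomputable def q (x : E n) : ℝ := ∑ i, x i * x i

noncomputable def ee (j : Fin n) : E n := EuclideanSpace.single j 1

lemma q_eq (x : E n) : q x = ‖x‖ ^ (2:ℕ) := by
  rw [EuclideanSpace.norm_eq, Real.sq_sqrt (by positivity)]
  simp [q, sq]

lemma q_nonneg (x : E n) : 0 ≤ q x := by rw [q_eq]; positivity

lemma q_pos {x : E n} (hx : x ≠ 0) : 0 < q x := by
  have h : ‖x‖ ≠ 0 := norm_ne_zero_iff.2 hx
  rw [q_eq]; positivity

lemma norm_rpow_eq (x : E n) (α : ℝ) : ‖x‖ ^ α = q x ^ (α/2) := by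
  rw [q_eq, ← Real.rpow_natCast ‖x‖ 2, ← Real.rpow_mul (norm_nonneg x)]
  congr 1; ring

lemma contDiff_q : ContDiff ℝ ⊤ (q (n := n)) := by
  apply ContDiff.sum (fun i _ => ?_)
  have hc : ContDiff ℝ ⊤ (fun y : E n => y i) :=
    (EuclideanSpace.proj i : E n →L[ℝ] ℝ).contDiff
  exact hc.mul hc

noncomputable def dq (x : E n) : E n →L[ℝ] ℝ := ∑ i, (2 * x i) • (EuclideanSpace.proj i)

lemma hasFDerivAt_q (x : E n) : HasFDerivAt q (dq x) x := by
  have : HasFDerivAt (q (n := n)) (∑ i, ((x i) • (EuclideanSpace.proj i : E n →L[ℝ] ℝ)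
      + (x i) • (EuclideanSpace.proj i))) x := by
    apply HasFDerivAt.fun_sum (fun i _ => ?_)
    have h := (EuclideanSpace.proj (𝕜 := ℝ) i).hasFDerivAt (x := x)
    simpa using h.fun_mul h
  convert this using 1
  unfold dq
  ext v
  simp [two_mul, add_smul]

lemma dq_apply (x : E n) (j : Fin n) : dq x (ee j) = 2 * x j := by
  unfold dq ee
  simp only [ContinuousLinearMap.sum_apply, ContinuousLinearMap.smul_apply,
    PiLp.proj_apply, EuclideanSpace.single_apply, smul_eq_mul]
  rw [Finset.sum_eq_single j] <;> simp +contextual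

lemma sum_single (x : E n) : ∑ j, x j • ee j = x := by
  have h := (EuclideanSpace.basisFun (Fin n) ℝ).sum_repr x
  simpa [ee, EuclideanSpace.basisFun_repr] using h


variable {P : E n → ℝ} {γ : ℕ}

lemma contDiff_eval (p : MvPolynomial (Fin n) ℝ) :
    ContDiff ℝ ⊤ (fun x : E n => MvPolynomial.eval (fun i => x i) p) := by
  induction p using MvPolynomial.induction_on with
  | C a => simpa using contDiff_const
  | add p q hpi hqi => simpa [MvPolynomial.eval_add] using hpi.add hqi
  | mul_X p i hpi =>
    simp only [MvPolynomial.eval_mul, MvPolynomial.eval_X]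
    exact hpi.mul ((EuclideanSpace.proj i : E n →L[ℝ] ℝ).contDiff)

lemma contDiff_poly (hp : ∃ p : MvPolynomial (Fin n) ℝ,
    ∀ x, P x = MvPolynomial.eval (fun i => x i) p) : ContDiff ℝ ⊤ P := by
  obtain ⟨p, hp⟩ := hp
  have he : P = fun x : E n => MvPolynomial.eval (fun i => x i) p := funext hp
  rw [he]; exact contDiff_eval p

lemma euler (hPc : ContDiff ℝ ⊤ P)
    (hhom : ∀ (t : ℝ) (x : E n), P (t • x) = t ^ γ * P x) (x : E n) :
    fderiv ℝ P x x = (γ : ℝ) * P x := by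
  have hline : HasDerivAt (fun t : ℝ => t • x) x 1 := by
    simpa using (hasDerivAt_id (1:ℝ)).smul_const x
  have h1 : HasDerivAt (fun t : ℝ => P (t • x)) (fderiv ℝ P ((1:ℝ) • x) x) 1 := by
    exact ((hPc.differentiable (by simp) ((1:ℝ) • x)).hasFDerivAt.comp_hasDerivAt 1 hline)
  have h2 : HasDerivAt (fun t : ℝ => t ^ γ * P x) ((γ : ℝ) * 1 ^ (γ - 1) * P x) 1 := by
    simpa using (hasDerivAt_pow γ (1:ℝ)).mul_const (P x)
  rw [funext fun t => hhom t x] at h1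
  have h3 := h1.unique h2
  simpa using h3

lemma euler_sum (hPc : ContDiff ℝ ⊤ P)
    (hhom : ∀ (t : ℝ) (x : E n), P (t • x) = t ^ γ * P x) (x : E n) :
    ∑ j, x j * fderiv ℝ P x (ee j) = (γ : ℝ) * P x := by
  have h2 : fderiv ℝ P x (∑ j, x j • ee j) = (γ:ℝ) * P x := by
    rw [sum_single]; exact euler hPc hhom x
  rw [map_sum] at h2
  simp only [map_smul, smul_eq_mul] at h2
  exact h2

lemma harm_sum (hPc : ContDiff ℝ ⊤ P) (hharm : ∀ x, laplacian P x = 0) (x : E n) :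
    ∑ j, fderiv ℝ (fderiv ℝ P) x (ee j) (ee j) = 0 := by
  have h := hharm x
  unfold laplacian at h
  rw [← h]
  apply Finset.sum_congr rfl
  intro j _
  rw [iteratedFDeriv_two_apply]
  simp [ee]


lemma hasFDerivAt_qs (s : ℝ) {x : E n} (hx : q x ≠ 0) :
    HasFDerivAt (fun y : E n => q y ^ s) ((s * q x ^ (s-1)) • dq x) x := by
  have hh : HasDerivAt (fun t : ℝ => t ^ s) (s * q x ^ (s-1)) (q x) :=
    Real.hasDerivAt_rpow_const (Or.inl hx)
  exact hh.comp_hasFDerivAt x (hasFDerivAt_q x)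

lemma hasFDerivAt_f (hPc : ContDiff ℝ ⊤ P) (s : ℝ) {x : E n} (hx : q x ≠ 0) :
    HasFDerivAt (fun y : E n => q y ^ s * P y)
      (q x ^ s • fderiv ℝ P x + P x • ((s * q x ^ (s-1)) • dq x)) x :=
  (hasFDerivAt_qs s hx).mul (hPc.differentiable (by simp) x).hasFDerivAt

lemma fderiv_f_apply (hPc : ContDiff ℝ ⊤ P) (s : ℝ) {x : E n} (hx : q x ≠ 0) (j : Fin n) :
    fderiv ℝ (fun y : E n => q y ^ s * P y) x (ee j)
      = q x ^ s * fderiv ℝ P x (ee j) + 2 * s * q x ^ (s-1) * x j * P x := by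
  rw [(hasFDerivAt_f hPc s hx).fderiv]
  simp only [ContinuousLinearMap.add_apply, ContinuousLinearMap.smul_apply, smul_eq_mul,
    dq_apply]
  ring

lemma fderiv_Df_apply (hPc : ContDiff ℝ ⊤ P) (s : ℝ) {x : E n} (hx : q x ≠ 0) (j : Fin n) :
    fderiv ℝ (fun y : E n => q y ^ s * fderiv ℝ P y (ee j) + 2 * s * q y ^ (s-1) * y j * P y)
        x (ee j)
      = q x ^ s * fderiv ℝ (fderiv ℝ P) x (ee j) (ee j)
        + 4 * s * q x ^ (s-1) * x j * fderiv ℝ P x (ee j)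
        + 2 * s * q x ^ (s-1) * P x
        + 4 * s * (s-1) * q x ^ (s-2) * x j * x j * P x := by
  have hP' : HasFDerivAt P (fderiv ℝ P x) x := (hPc.differentiable (by simp) x).hasFDerivAt
  have hD : DifferentiableAt ℝ (fderiv ℝ P) x :=
    ((hPc.fderiv_right (m := 1) le_top).differentiable one_ne_zero).differentiableAt
  have hdPj : HasFDerivAt (fun y : E n => fderiv ℝ P y (ee j))
      ((fderiv ℝ (fderiv ℝ P) x).flip (ee j)) x := by
    have h := hD.hasFDerivAt.clm_apply (hasFDerivAt_const (ee j) x)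
    simpa using h
  have hproj : HasFDerivAt (fun y : E n => y j)
      (EuclideanSpace.proj j : E n →L[ℝ] ℝ) x :=
    (EuclideanSpace.proj j : E n →L[ℝ] ℝ).hasFDerivAt
  have g1 := (hasFDerivAt_qs s hx).fun_mul hdPj
  have a1 := (hasFDerivAt_qs (s-1) hx).const_mul (2*s)
  have b1 := a1.fun_mul hproj
  have g2 := b1.fun_mul hP'
  have total := g1.fun_add g2
  rw [total.fderiv]
  simp only [ContinuousLinearMap.add_apply, ContinuousLinearMap.smul_apply,
    ContinuousLinearMap.flip_apply, smul_eq_mul, dq_apply, PiLp.proj_apply]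
  have hjj : ee j j = 1 := by simp [ee, EuclideanSpace.single_apply]
  have hs2 : s - 1 - 1 = s - 2 := by ring
  rw [hjj, hs2]
  ring


lemma isOpen_qne : IsOpen {y : E n | q y ≠ 0} :=
  isOpen_compl_singleton.preimage (contDiff_q.continuous)

lemma contDiffAt_f (hPc : ContDiff ℝ ⊤ P) (s : ℝ) {x : E n} (hx : q x ≠ 0) :
    ContDiffAt ℝ 2 (fun y : E n => q y ^ s * P y) x := by
  have hq2 : ContDiffAt ℝ 2 q x := (contDiff_q.of_le le_top).contDiffAt
  have hr : ContDiffAt ℝ 2 (fun t : ℝ => t ^ s) (q x) :=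
    Real.contDiffAt_rpow_const_of_ne hx
  exact (hr.comp x hq2).mul ((hPc.of_le le_top).contDiffAt)

lemma laplacian_f (hPc : ContDiff ℝ ⊤ P)
    (hhom : ∀ (t : ℝ) (x : E n), P (t • x) = t ^ γ * P x)
    (hharm : ∀ x, laplacian P x = 0)
    (s : ℝ) {x : E n} (hx : q x ≠ 0) :
    laplacian (fun y : E n => q y ^ s * P y) x
      = (2*s*(2*s + n - 2 + 2*(γ:ℝ))) * q x ^ (s-1) * P x := by
  have hdf : DifferentiableAt ℝ (fderiv ℝ (fun y : E n => q y ^ s * P y)) x :=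
    ((contDiffAt_f hPc s hx).fderiv_right (m := 1) (by norm_num)).differentiableAt one_ne_zero
  have key : ∀ j : Fin n, iteratedFDeriv ℝ 2 (fun y : E n => q y ^ s * P y) x
      ![EuclideanSpace.single j 1, EuclideanSpace.single j 1]
      = q x ^ s * fderiv ℝ (fderiv ℝ P) x (ee j) (ee j)
        + 4 * s * q x ^ (s-1) * x j * fderiv ℝ P x (ee j)
        + 2 * s * q x ^ (s-1) * P x
        + 4 * s * (s-1) * q x ^ (s-2) * x j * x j * P x := by
    intro j
    rw [iteratedFDeriv_two_apply]
    simp only [Matrix.cons_val_zero, Matrix.cons_val_one, Matrix.head_cons]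
    have hcl := fderiv_clm_apply (c := fderiv ℝ (fun y : E n => q y ^ s * P y))
      (u := fun _ => ee j) hdf (differentiableAt_const (ee j))
    have hstep : fderiv ℝ (fderiv ℝ (fun y : E n => q y ^ s * P y)) x
        (EuclideanSpace.single j 1) (EuclideanSpace.single j 1)
        = fderiv ℝ (fun y : E n => fderiv ℝ (fun z : E n => q z ^ s * P z) y (ee j)) x (ee j) := by
      rw [hcl]
      simp [ee]
    rw [hstep]
    have hev : (fun y : E n => fderiv ℝ (fun z : E n => q z ^ s * P z) y (ee j))
        =ᶠ[nhds x] (fun y : E n =>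
          q y ^ s * fderiv ℝ P y (ee j) + 2 * s * q y ^ (s-1) * y j * P y) := by
      filter_upwards [isOpen_qne.mem_nhds hx] with y hy
      exact fderiv_f_apply hPc s hy j
    rw [hev.fderiv_eq]
    exact fderiv_Df_apply hPc s hx j
  unfold laplacian
  rw [Finset.sum_congr rfl (fun j _ => key j)]
  rw [Finset.sum_add_distrib, Finset.sum_add_distrib, Finset.sum_add_distrib]
  have e1 : ∑ j : Fin n, q x ^ s * fderiv ℝ (fderiv ℝ P) x (ee j) (ee j) = 0 := by
    rw [← Finset.mul_sum, harm_sum hPc hharm x, mul_zero]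
  have e2 : ∑ j : Fin n, 4 * s * q x ^ (s-1) * x j * fderiv ℝ P x (ee j)
      = 4 * s * q x ^ (s-1) * ((γ:ℝ) * P x) := by
    rw [← euler_sum hPc hhom x, Finset.mul_sum]
    exact Finset.sum_congr rfl (fun j _ => by ring)
  have e3 : ∑ _j : Fin n, 2 * s * q x ^ (s-1) * P x = (n:ℝ) * (2 * s * q x ^ (s-1) * P x) := by
    rw [Finset.sum_const, Finset.card_univ, Fintype.card_fin, nsmul_eq_mul]
  have e4 : ∑ j : Fin n, 4 * s * (s-1) * q x ^ (s-2) * x j * x j * P x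
      = 4 * s * (s-1) * q x ^ (s-2) * P x * q x := by
    have h5 : ∑ j : Fin n, 4 * s * (s-1) * q x ^ (s-2) * x j * x j * P x
        = (4 * s * (s-1) * q x ^ (s-2) * P x) * ∑ j, x j * x j := by
      rw [Finset.mul_sum]
      exact Finset.sum_congr rfl (fun j _ => by ring)
    rw [h5]; rfl
  rw [e1, e2, e3, e4]
  have hpow : q x ^ (s-2) * q x = q x ^ (s-1) := by
    rw [← Real.rpow_add_one hx (s-2)]
    congr 1
    ring
  linear_combination (4*s*(s-1)*P x) * hpow


lemma laplacian_congr {f g : E n → ℝ} {x : E n} (hev : f =ᶠ[nhds x] g) :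
    laplacian f x = laplacian g x := by
  unfold laplacian
  have h2 : iteratedFDeriv ℝ 2 f x = iteratedFDeriv ℝ 2 g x := by
    rw [← iteratedFDerivWithin_univ, ← iteratedFDerivWithin_univ]
    apply Filter.EventuallyEq.iteratedFDerivWithin_eq _ hev.eq_of_nhds
    rw [nhdsWithin_univ]
    exact hev
  rw [h2]

lemma laplacian_add {f g : E n → ℝ} {x : E n} {s : Set (E n)} (hs : IsOpen s) (hx : x ∈ s)
    (hf : ContDiffOn ℝ 2 f s) (hg : ContDiffOn ℝ 2 g s) :
    laplacian (fun y => f y + g y) x = laplacian f x + laplacian g x := by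
  unfold laplacian
  rw [← Finset.sum_add_distrib]
  apply Finset.sum_congr rfl
  intro i _
  rw [← iteratedFDerivWithin_of_isOpen 2 hs hx, ← iteratedFDerivWithin_of_isOpen 2 hs hx,
    ← iteratedFDerivWithin_of_isOpen 2 hs hx]
  rw [iteratedFDerivWithin_add_apply' (hf x hx) (hg x hx) hs.uniqueDiffOn hx]
  rfl

lemma laplacian_smul (a : ℝ) {f : E n → ℝ} {x : E n} {s : Set (E n)} (hs : IsOpen s)
    (hx : x ∈ s) (hf : ContDiffOn ℝ 2 f s) :
    laplacian (fun y => a * f y) x = a * laplacian f x := by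
  unfold laplacian
  rw [Finset.mul_sum]
  apply Finset.sum_congr rfl
  intro i _
  rw [← iteratedFDerivWithin_of_isOpen 2 hs hx, ← iteratedFDerivWithin_of_isOpen 2 hs hx]
  have he : (fun y => a * f y) = a • f := by funext y; simp
  rw [he, iteratedFDerivWithin_const_smul_apply (hf x hx) hs.uniqueDiffOn hx]
  rfl

lemma contDiffOn_f (hPc : ContDiff ℝ ⊤ P) (s : ℝ) :
    ContDiffOn ℝ 2 (fun y : E n => q y ^ s * P y) {y : E n | q y ≠ 0} :=
  fun y hy => (contDiffAt_f hPc s hy).contDiffWithinAt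


lemma Hout_eq (m γ : ℕ) (P : E (2*m) → ℝ) (h k : ℝ) :
    Hout m γ P h k = fun y =>
      (h + k/(4*((γ:ℝ)+(m:ℝ)-2))) * (q y ^ ((1:ℝ)-(m:ℝ)-(γ:ℝ)) * P y)
      + (-(k/(4*((γ:ℝ)+(m:ℝ)-2)))) * (q y ^ ((2:ℝ)-(m:ℝ)-(γ:ℝ)) * P y) := by
  funext y
  unfold Hout
  rw [norm_rpow_eq y ((2:ℝ) - 2*(m:ℝ) - 2*(γ:ℝ)), norm_rpow_eq y ((4:ℝ) - 2*(m:ℝ) - 2*(γ:ℝ))]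
  rw [show ((2:ℝ) - 2*(m:ℝ) - 2*(γ:ℝ))/2 = (1:ℝ)-(m:ℝ)-(γ:ℝ) by ring,
      show ((4:ℝ) - 2*(m:ℝ) - 2*(γ:ℝ))/2 = (2:ℝ)-(m:ℝ)-(γ:ℝ) by ring]
  ring

lemma lap_Hout (m γ : ℕ) (hd : (0:ℝ) < (γ:ℝ) + (m:ℝ) - 2) {P : E (2*m) → ℝ}
    (hPc : ContDiff ℝ ⊤ P)
    (hhom : ∀ (t : ℝ) (x : E (2*m)), P (t • x) = t ^ γ * P x)
    (hharm : ∀ x, laplacian P x = 0)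
    (h k : ℝ) {x : E (2*m)} (hx : q x ≠ 0) :
    laplacian (Hout m γ P h k) x = k * (q x ^ ((1:ℝ)-(m:ℝ)-(γ:ℝ)) * P x) := by
  rw [Hout_eq]
  rw [laplacian_add (f := fun y => (h + k/(4*((γ:ℝ)+(m:ℝ)-2))) * (q y ^ ((1:ℝ)-(m:ℝ)-(γ:ℝ)) * P y))
      (g := fun y => (-(k/(4*((γ:ℝ)+(m:ℝ)-2)))) * (q y ^ ((2:ℝ)-(m:ℝ)-(γ:ℝ)) * P y))
      isOpen_qne hx
      (contDiffOn_const.mul (contDiffOn_f hPc _))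
      (contDiffOn_const.mul (contDiffOn_f hPc _))]
  rw [laplacian_smul _ isOpen_qne hx (contDiffOn_f hPc _),
      laplacian_smul _ isOpen_qne hx (contDiffOn_f hPc _)]
  rw [laplacian_f hPc hhom hharm _ hx, laplacian_f hPc hhom hharm _ hx]
  rw [show ((2:ℝ)-(m:ℝ)-(γ:ℝ)-1) = (1:ℝ)-(m:ℝ)-(γ:ℝ) by ring]
  push_cast
  field_simp
  ring

end S7aux

/-- For `m ≥ 2`, `γ ≥ 0` with `(m,γ) ≠ (2,0)`, a homogeneous harmonic
polynomial `P` of degree `γ` on `ℝ^(2m)` and `h, k ∈ ℝ`, the exterior extension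
`u(x) = (h + k/(4(γ+m-2))) ‖x‖^(2-2m-2γ) P(x) - (k/(4(γ+m-2))) ‖x‖^(4-2m-2γ) P(x)`
is biharmonic on `ℝ^(2m) \ {0}`, satisfies `u = h P` and `Δu = k P` on the unit sphere,
and `u(x) = O(‖x‖^(4-2m-γ))` as `‖x‖ → ∞`. -/
theorem statement7 (m γ : ℕ) (hm : 2 ≤ m) (hne : ¬(m = 2 ∧ γ = 0))
    (P : EuclideanSpace ℝ (Fin (2 * m)) → ℝ)
    (hP : IsHomHarmonicPoly (2 * m) γ P) (h k : ℝ) :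
    (∀ x : EuclideanSpace ℝ (Fin (2 * m)), x ≠ 0 →
      laplacian (laplacian (Hout m γ P h k)) x = 0) ∧
    (∀ x : EuclideanSpace ℝ (Fin (2 * m)), ‖x‖ = 1 →
      Hout m γ P h k x = h * P x ∧ laplacian (Hout m γ P h k) x = k * P x) ∧
    (∃ C R : ℝ, ∀ x : EuclideanSpace ℝ (Fin (2 * m)), R ≤ ‖x‖ →
      |Hout m γ P h k x| ≤ C * ‖x‖ ^ ((4 : ℝ) - 2 * (m : ℝ) - (γ : ℝ))) := by
  obtain ⟨hpoly, hhom, hharm⟩ := hP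
  have hPc : ContDiff ℝ ⊤ P := S7aux.contDiff_poly hpoly
  have h3 : 3 ≤ γ + m := by omega
  have hd : (0:ℝ) < (γ:ℝ) + (m:ℝ) - 2 := by
    have h4 : (3:ℝ) ≤ (γ:ℝ) + (m:ℝ) := by exact_mod_cast h3
    linarith
  refine ⟨?_, ?_, ?_⟩
  · -- biharmonic
    intro x hx
    have hqx : S7aux.q x ≠ 0 := (S7aux.q_pos hx).ne'
    have hev : laplacian (Hout m γ P h k)
        =ᶠ[nhds x] (fun y => k * (S7aux.q y ^ ((1:ℝ)-(m:ℝ)-(γ:ℝ)) * P y)) := by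
      filter_upwards [S7aux.isOpen_qne.mem_nhds hqx] with y hy
      exact S7aux.lap_Hout m γ hd hPc hhom hharm h k hy
    rw [S7aux.laplacian_congr hev]
    rw [S7aux.laplacian_smul k S7aux.isOpen_qne hqx (S7aux.contDiffOn_f hPc _)]
    rw [S7aux.laplacian_f hPc hhom hharm _ hqx]
    push_cast
    ring
  · -- boundary values
    intro x hx1
    have hx0 : x ≠ 0 := by
      intro h0; rw [h0] at hx1; simp at hx1
    have hqx : S7aux.q x = 1 := by rw [S7aux.q_eq, hx1]; norm_num
    constructor
    · unfold Hout
      rw [hx1, Real.one_rpow, Real.one_rpow]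
      ring
    · rw [S7aux.lap_Hout m γ hd hPc hhom hharm h k (by rw [hqx]; norm_num)]
      rw [hqx, Real.one_rpow]
      ring
  · -- growth
    obtain ⟨M, hM⟩ := (isCompact_sphere (0 : EuclideanSpace ℝ (Fin (2*m))) 1)
      |>.exists_bound_of_continuousOn (hPc.continuous.continuousOn)
    set M' := max M 0 with hM'def
    have hM0 : 0 ≤ M' := le_max_right M 0
    have hPbound : ∀ x : EuclideanSpace ℝ (Fin (2*m)), x ≠ 0 →
        |P x| ≤ M' * ‖x‖ ^ ((γ:ℝ)) := by
      intro x hx0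
      have hnx : ‖x‖ ≠ 0 := norm_ne_zero_iff.2 hx0
      have hu : ‖(‖x‖⁻¹ • x)‖ = 1 := by
        rw [norm_smul, norm_inv, norm_norm]
        field_simp
      have hxu : ‖x‖ • (‖x‖⁻¹ • x) = x := by
        rw [smul_smul, mul_inv_cancel₀ hnx, one_smul]
      have hval : P x = ‖x‖ ^ γ * P (‖x‖⁻¹ • x) := by
        rw [← hhom ‖x‖ (‖x‖⁻¹ • x), hxu]
      have hMu : |P (‖x‖⁻¹ • x)| ≤ M' := by
        refine le_trans ?_ (le_max_left M 0)
        have := hM (‖x‖⁻¹ • x) (by rwa [mem_sphere_zero_iff_norm])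
        simpa using this
      rw [hval, abs_mul, abs_pow, abs_norm]
      calc ‖x‖ ^ γ * |P (‖x‖⁻¹ • x)| ≤ ‖x‖ ^ γ * M' :=
            mul_le_mul_of_nonneg_left hMu (by positivity)
        _ = M' * ‖x‖ ^ ((γ:ℝ)) := by rw [← Real.rpow_natCast ‖x‖ γ]; ring
    refine ⟨(|h + k / (4 * ((γ:ℝ) + (m:ℝ) - 2))| + |k / (4 * ((γ:ℝ) + (m:ℝ) - 2))|) * M',
      1, ?_⟩
    intro x hx1
    have hx0 : (0:ℝ) < ‖x‖ := lt_of_lt_of_le one_pos hx1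
    have hxne : x ≠ 0 := by
      intro h0; rw [h0, norm_zero] at hx0; exact lt_irrefl 0 hx0
    set c1 := h + k / (4 * ((γ:ℝ) + (m:ℝ) - 2)) with hc1
    set c2 := k / (4 * ((γ:ℝ) + (m:ℝ) - 2)) with hc2
    have htri : |Hout m γ P h k x| ≤
        |c1 * ‖x‖ ^ ((2:ℝ) - 2*(m:ℝ) - 2*(γ:ℝ)) * P x|
        + |c2 * ‖x‖ ^ ((4:ℝ) - 2*(m:ℝ) - 2*(γ:ℝ)) * P x| := by
      unfold Hout
      rw [sub_eq_add_neg]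
      refine (abs_add_le _ _).trans ?_
      rw [abs_neg]
    have hb : ∀ a : ℝ, ∀ c : ℝ, a + (γ:ℝ) ≤ (4:ℝ) - 2*(m:ℝ) - (γ:ℝ) →
        |c * ‖x‖ ^ a * P x| ≤ |c| * M' * ‖x‖ ^ ((4:ℝ) - 2*(m:ℝ) - (γ:ℝ)) := by
      intro a c hle
      rw [abs_mul, abs_mul, abs_of_nonneg (Real.rpow_nonneg (norm_nonneg x) a)]
      calc |c| * ‖x‖ ^ a * |P x| ≤ |c| * ‖x‖ ^ a * (M' * ‖x‖ ^ ((γ:ℝ))) := by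
            apply mul_le_mul_of_nonneg_left (hPbound x hxne) (by positivity)
        _ = |c| * M' * ‖x‖ ^ (a + (γ:ℝ)) := by rw [Real.rpow_add hx0]; ring
        _ ≤ |c| * M' * ‖x‖ ^ ((4:ℝ) - 2*(m:ℝ) - (γ:ℝ)) := by
            apply mul_le_mul_of_nonneg_left
              (Real.rpow_le_rpow_of_exponent_le hx1 hle) (by positivity)
    have hb1 := hb ((2:ℝ) - 2*(m:ℝ) - 2*(γ:ℝ)) c1 (by linarith)
    have hb2 := hb ((4:ℝ) - 2*(m:ℝ) - 2*(γ:ℝ)) c2 (by linarith)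
    calc |Hout m γ P h k x| ≤ _ := htri
      _ ≤ |c1| * M' * ‖x‖ ^ ((4:ℝ) - 2*(m:ℝ) - (γ:ℝ))
          + |c2| * M' * ‖x‖ ^ ((4:ℝ) - 2*(m:ℝ) - (γ:ℝ)) := add_le_add hb1 hb2
      _ = (|c1| + |c2|) * M' * ‖x‖ ^ ((4:ℝ) - 2*(m:ℝ) - (γ:ℝ)) := by ring
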